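/- Let (V, E) be a finite simple graph, let 𝒢 be the family of subsets S of V ⊎ E such that every edge in S ∩ E has at least one endpoint in S, and let w(v) = 1 − deg(v) for v ∈ V and w(e) = 1 for e ∈ E, extended additively to sets. Then the maximum of w(S) over S ∈ 𝒢 equals the maximum cardinality of an independent set of (V, E). -/

import Mathlib

/-- `S` is feasible: every edge in `S` has at least one of its endpoints in `S`.
The ground set is the disjoint union `V ⊕ E` of vertices and edges. -/
def GraphFeasible {V : Type*} [Fintype V] [DecidableEq V] (G : SimpleGraph V)
    (S : Finset (V ⊕ G.edgeSet)) : Prop :=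
  ∀ e : G.edgeSet, Sum.inr e ∈ S → ∃ v ∈ (e : Sym2 V), Sum.inl v ∈ S

/-- The weight function: `w(v) = 1 - deg v` on vertices, `w(e) = 1` on edges. -/
def graphWeight {V : Type*} [Fintype V] [DecidableEq V] (G : SimpleGraph V)
    [DecidableRel G.Adj] : V ⊕ G.edgeSet → ℤ
  | Sum.inl v => 1 - G.degree v
  | Sum.inr _ => 1

/-- `U` is an independent set of vertices. -/
def IndepSet {V : Type*} (G : SimpleGraph V) (U : Finset V) : Prop :=
  ∀ u ∈ U, ∀ v ∈ U, ¬ G.Adj u v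

open Finset

section Helpers

open scoped Classical

variable {V : Type*} [Fintype V] [DecidableEq V] (G : SimpleGraph V) [DecidableRel G.Adj]

private lemma sum_split (S : Finset (V ⊕ G.edgeSet)) (f : V ⊕ G.edgeSet → ℤ) :
    ∑ x ∈ S, f x = ∑ v ∈ S.toLeft, f (Sum.inl v) + ∑ e ∈ S.toRight, f (Sum.inr e) := by
  conv_lhs => rw [← S.toLeft_disjSum_toRight]
  rw [← Finset.map_inl_disjUnion_map_inr, Finset.sum_disjUnion, Finset.sum_map, Finset.sum_map]
  rfl

private lemma degree_eq_card (v : V) :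
    G.degree v = (univ.filter fun e : G.edgeSet => v ∈ (e : Sym2 V)).card := by
  rw [← SimpleGraph.card_incidenceSet_eq_degree, ← Fintype.card_subtype]
  exact Fintype.card_congr
    ⟨fun y => ⟨⟨y.1, y.2.1⟩, y.2.2⟩, fun x => ⟨x.1.1, x.1.2, x.2⟩,
      fun _ => rfl, fun _ => rfl⟩

private lemma sum_degree_eq (A : Finset V) :
    ∑ v ∈ A, G.degree v = ∑ e : G.edgeSet, (A.filter (· ∈ (e : Sym2 V))).card := by
  simp only [degree_eq_card G, Finset.card_filter]
  rw [Finset.sum_comm]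

/-- Edges both of whose endpoints lie in `A`. -/
private noncomputable def internalE (A : Finset V) : Finset G.edgeSet :=
  univ.filter fun e : G.edgeSet => ∀ v ∈ (e : Sym2 V), v ∈ A

private lemma mem_internalE {A : Finset V} {e : G.edgeSet} :
    e ∈ internalE G A ↔ ∀ v ∈ (e : Sym2 V), v ∈ A := by
  simp [internalE]

private lemma two_le_filter (A : Finset V) (e : G.edgeSet)
    (h : ∀ v ∈ (e : Sym2 V), v ∈ A) :
    2 ≤ (A.filter (· ∈ (e : Sym2 V))).card := by
  obtain ⟨e, he⟩ := e
  revert he h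
  induction e using Sym2.ind with
  | _ a b =>
    intro he h
    have hab : a ≠ b := ((SimpleGraph.mem_edgeSet G).mp he).ne
    have ha : a ∈ A := h a (by simp)
    have hb : b ∈ A := h b (by simp)
    calc 2 = ({a, b} : Finset V).card := (Finset.card_pair hab).symm
      _ ≤ _ := by
          apply Finset.card_le_card
          intro x hx
          simp only [Finset.mem_insert, Finset.mem_singleton] at hx
          rcases hx with rfl | rfl <;> simp [Finset.mem_filter, ha, hb]

private lemma filter_card_indep (U : Finset V) (hU : IndepSet G U) (e : G.edgeSet) :
    (U.filter (· ∈ (e : Sym2 V))).card = if ∃ v ∈ (e : Sym2 V), v ∈ U then 1 else 0 := by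
  obtain ⟨e, he⟩ := e
  revert he
  induction e using Sym2.ind with
  | _ a b =>
    intro he
    have hadj : G.Adj a b := (SimpleGraph.mem_edgeSet G).mp he
    split
    · next hex =>
      obtain ⟨v, hv, hvU⟩ := hex
      refine le_antisymm ?_ ?_
      · apply Finset.card_le_one.mpr
        intro x hx y hy
        simp only [Finset.mem_filter, Sym2.mem_iff] at hx hy
        rcases hx.2 with rfl | rfl <;> rcases hy.2 with rfl | rfl
        · rfl
        · exact absurd hadj (hU x hx.1 y hy.1)
        · exact absurd hadj (hU y hy.1 x hx.1)
        · rfl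
      · exact Finset.card_pos.mpr ⟨v, Finset.mem_filter.mpr ⟨hvU, hv⟩⟩
    · next hnex =>
      rw [Finset.card_eq_zero, Finset.filter_eq_empty_iff]
      intro x hxU hxe
      exact hnex ⟨x, hxe, hxU⟩

private lemma count_le (A : Finset V) (B : Finset G.edgeSet)
    (hB : ∀ e ∈ B, ∃ v ∈ (e : Sym2 V), v ∈ A) :
    B.card + (internalE G A).card ≤ ∑ v ∈ A, G.degree v := by
  rw [sum_degree_eq]
  have h1 : B.card = ∑ e : G.edgeSet, if e ∈ B then 1 else 0 := by
    simp [Finset.sum_ite_mem]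
  have h2 : (internalE G A).card = ∑ e : G.edgeSet, if e ∈ internalE G A then 1 else 0 := by
    simp [Finset.sum_ite_mem]
  rw [h1, h2, ← Finset.sum_add_distrib]
  apply Finset.sum_le_sum
  intro e _
  by_cases hint : e ∈ internalE G A
  · have h2le := two_le_filter G A e (mem_internalE G |>.mp hint)
    have : (if e ∈ B then 1 else 0) ≤ 1 := by split <;> simp
    simp only [hint, if_true]
    omega
  · simp only [hint, if_false, add_zero]
    by_cases heB : e ∈ B
    · simp only [heB, if_true]
      obtain ⟨v, hv, hvA⟩ := hB e heB
      exact Finset.card_pos.mpr ⟨v, Finset.mem_filter.mpr ⟨hvA, hv⟩⟩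
    · simp [heB]

private lemma indep_extract : ∀ (n : ℕ) (W : Finset V), W.card ≤ n →
    ∃ Uw : Finset V, IndepSet G Uw ∧ W.card ≤ Uw.card + (internalE G W).card := by
  intro n
  induction n with
  | zero =>
    intro W hW
    refine ⟨∅, fun u hu => by simp at hu, ?_⟩
    omega
  | succ n ih =>
    intro W hW
    by_cases hie : internalE G W = ∅
    · refine ⟨W, ?_, le_self_add⟩
      intro u hu v hv hadj
      have : (⟨s(u, v), (SimpleGraph.mem_edgeSet G).mpr hadj⟩ : G.edgeSet) ∈ internalE G W := by
        rw [mem_internalE]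
        intro x hx
        rcases Sym2.mem_iff.mp hx with rfl | rfl
        · exact hu
        · exact hv
      rw [hie] at this
      exact absurd this (Finset.notMem_empty _)
    · obtain ⟨e, hemem⟩ := Finset.nonempty_iff_ne_empty.mpr hie
      have hall : ∀ v ∈ (e : Sym2 V), v ∈ W := (mem_internalE G).mp hemem
      obtain ⟨a, ha⟩ : ∃ a, a ∈ (e : Sym2 V) := ⟨(e : Sym2 V).out.1, Sym2.out_fst_mem _⟩
      have haW : a ∈ W := hall a ha
      set W' := W.erase a with hW'
      have hcard : W'.card + 1 = W.card := Finset.card_erase_add_one haW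
      obtain ⟨Uw, hUw, hle⟩ := ih W' (by omega)
      have hss : internalE G W' ⊂ internalE G W := by
        constructor
        · intro e' he'
          rw [mem_internalE] at he' ⊢
          exact fun v hv => Finset.mem_of_mem_erase (he' v hv)
        · intro hsub
          have : e ∈ internalE G W' := hsub hemem
          have := (mem_internalE G).mp this a ha
          exact absurd this (Finset.notMem_erase a W)
      have hclt : (internalE G W').card < (internalE G W).card := Finset.card_lt_card hss
      exact ⟨Uw, hUw, by omega⟩

end Helpers

/-- **Max weight feasible set equals max independent set.** The maximum of `w(S)`
over feasible sets `S` equals the maximum cardinality of an independent set: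
there are a weight-maximizing feasible set and a maximum independent set whose
values coincide. -/
theorem max_weight_feasible_eq_max_indep
    {V : Type*} [Fintype V] [DecidableEq V] (G : SimpleGraph V) [DecidableRel G.Adj] :
    ∃ S : Finset (V ⊕ G.edgeSet), GraphFeasible G S ∧
      ∃ U : Finset V, IndepSet G U ∧
        ∑ x ∈ S, graphWeight G x = (U.card : ℤ) ∧
        (∀ S' : Finset (V ⊕ G.edgeSet), GraphFeasible G S' →
          ∑ x ∈ S', graphWeight G x ≤ ∑ x ∈ S, graphWeight G x) ∧
        (∀ U' : Finset V, IndepSet G U' → U'.card ≤ U.card) := by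
  classical
  -- choose a maximum independent set
  have hne : ((univ : Finset (Finset V)).filter (fun U => IndepSet G U)).Nonempty :=
    ⟨∅, Finset.mem_filter.mpr ⟨Finset.mem_univ _, by simp [IndepSet]⟩⟩
  obtain ⟨U, hUmem, hUmax⟩ := Finset.exists_max_image _ (fun U : Finset V => U.card) hne
  have hU : IndepSet G U := (Finset.mem_filter.mp hUmem).2
  have hUmax' : ∀ U' : Finset V, IndepSet G U' → U'.card ≤ U.card := fun U' h =>
    hUmax U' (Finset.mem_filter.mpr ⟨Finset.mem_univ _, h⟩)
  -- the incident edge set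
  set Inc : Finset G.edgeSet := univ.filter (fun e => ∃ v ∈ (e : Sym2 V), v ∈ U) with hInc
  refine ⟨U.disjSum Inc, ?_, U, hU, ?_, ?_, hUmax'⟩
  · intro e he
    rw [Finset.inr_mem_disjSum, hInc, Finset.mem_filter] at he
    obtain ⟨-, v, hv, hvU⟩ := he
    exact ⟨v, hv, by simp [hvU]⟩
  · -- weight of the constructed set is |U|
    rw [sum_split]
    simp only [Finset.toLeft_disjSum, Finset.toRight_disjSum]
    have hIncCard : (Inc.card : ℕ) = ∑ v ∈ U, G.degree v := by
      rw [sum_degree_eq, hInc, Finset.card_filter]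
      exact Finset.sum_congr rfl fun e _ => (filter_card_indep G U hU e).symm
    have hw1 : ∀ v ∈ U, graphWeight G (Sum.inl v) = 1 - (G.degree v : ℤ) := fun v _ => rfl
    have hw2 : ∀ e ∈ Inc, graphWeight G (Sum.inr e) = 1 := fun e _ => rfl
    rw [Finset.sum_congr rfl hw1, Finset.sum_congr rfl hw2, Finset.sum_sub_distrib]
    simp only [Finset.sum_const, nsmul_eq_mul, mul_one]
    rw [← Nat.cast_sum, ← hIncCard]
    push_cast
    ring
  · -- upper bound for any feasible S'
    intro S' hS'
    rw [sum_split]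
    set A := S'.toLeft with hA
    set B := S'.toRight with hBdef
    have hw1 : ∀ v ∈ A, graphWeight G (Sum.inl v) = 1 - (G.degree v : ℤ) := fun v _ => rfl
    have hw2 : ∀ e ∈ B, graphWeight G (Sum.inr e) = 1 := fun e _ => rfl
    rw [Finset.sum_congr rfl hw1, Finset.sum_congr rfl hw2, Finset.sum_sub_distrib]
    simp only [Finset.sum_const, nsmul_eq_mul, mul_one]
    have hBfeas : ∀ e ∈ B, ∃ v ∈ (e : Sym2 V), v ∈ A := by
      intro e he
      obtain ⟨v, hv, hvS⟩ := hS' e (Finset.mem_toRight.mp he)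
      exact ⟨v, hv, Finset.mem_toLeft.mpr hvS⟩
    have hc1 : B.card + (internalE G A).card ≤ ∑ v ∈ A, G.degree v := count_le G A B hBfeas
    obtain ⟨Uw, hUw, hc2⟩ := indep_extract G A.card A le_rfl
    have hUwle : Uw.card ≤ U.card := hUmax' Uw hUw
    -- target: |A| + |B| - Σ deg ≤ |U|
    have hwS : ∑ x ∈ U.disjSum Inc, graphWeight G x = (U.card : ℤ) := by
      rw [sum_split]
      simp only [Finset.toLeft_disjSum, Finset.toRight_disjSum]
      have hIncCard : (Inc.card : ℕ) = ∑ v ∈ U, G.degree v := by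
        rw [sum_degree_eq, hInc, Finset.card_filter]
        exact Finset.sum_congr rfl fun e _ => (filter_card_indep G U hU e).symm
      have hw1 : ∀ v ∈ U, graphWeight G (Sum.inl v) = 1 - (G.degree v : ℤ) := fun v _ => rfl
      have hw2 : ∀ e ∈ Inc, graphWeight G (Sum.inr e) = 1 := fun e _ => rfl
      rw [Finset.sum_congr rfl hw1, Finset.sum_congr rfl hw2, Finset.sum_sub_distrib]
      simp only [Finset.sum_const, nsmul_eq_mul, mul_one]
      rw [← Nat.cast_sum, ← hIncCard]
      push_cast
      ring
    rw [hwS]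
    have key : (B.card : ℤ) + (internalE G A).card ≤ ∑ x ∈ A, (G.degree x : ℤ) := by
      exact_mod_cast hc1
    omega
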